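/- Let items 1, …, m have costs c_i > 0 and sizes p_i > 0, and let B > 0 be a budget. Let E_B = {i : c_i ≤ B}, and let G ⊆ E_B be obtained by processing the items of E_B in some order of non-decreasing density c_i/p_i, adding each item provided the total cost of the items currently in G is at most B. Then Σ_{i∈G} c_i ≤ 2B, and for every subset X ⊆ {1,…,m} with Σ_{i∈X} c_i ≤ B we have Σ_{i∈G} p_i ≥ Σ_{i∈X} p_i. -/

import Mathlib

open Classical in
/-- Process a list of items in order, adding each item to the current selection
provided the total cost of the items currently selected is at most `B`. -/
noncomputable def greedyDensity (c : ℕ → ℝ) (B : ℝ) : List ℕ → Finset ℕ → Finset ℕ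
  | [], G => G
  | i :: rest, G =>
    if ∑ x ∈ G, c x ≤ B then greedyDensity c B rest (insert i G)
    else greedyDensity c B rest G

lemma gd_stop (c : ℕ → ℝ) (B : ℝ) (L : List ℕ) (G : Finset ℕ)
    (h : ¬ ∑ x ∈ G, c x ≤ B) : greedyDensity c B L G = G := by
  induction L with
  | nil => rfl
  | cons i rest ih => rw [greedyDensity, if_neg h]; exact ih

lemma gd_struct (c : ℕ → ℝ) (B : ℝ) (L : List ℕ) (G : Finset ℕ) :
    ∃ L₁ L₂ : List ℕ, L = L₁ ++ L₂ ∧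
      greedyDensity c B L G = G ∪ L₁.toFinset ∧
      (L₂ ≠ [] → ¬ ∑ x ∈ greedyDensity c B L G, c x ≤ B) := by
  induction L generalizing G with
  | nil => exact ⟨[], [], rfl, by simp [greedyDensity], by simp⟩
  | cons i rest ih =>
    by_cases h : ∑ x ∈ G, c x ≤ B
    · obtain ⟨L₁, L₂, hL, hG, hstop⟩ := ih (insert i G)
      refine ⟨i :: L₁, L₂, by simp [hL], ?_, ?_⟩
      · rw [greedyDensity, if_pos h, hG]
        ext x; simp [or_assoc]
      · intro h2; rw [greedyDensity, if_pos h]; exact hstop h2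
    · refine ⟨[], i :: rest, rfl, ?_, fun _ => ?_⟩
      · rw [greedyDensity, if_neg h, gd_stop c B rest G h]; simp
      · rw [greedyDensity, if_neg h, gd_stop c B rest G h]; exact h

lemma gd_bound (c : ℕ → ℝ) (B : ℝ) (L : List ℕ) (G : Finset ℕ)
    (hG : ∑ x ∈ G, c x ≤ 2 * B)
    (hc : ∀ i ∈ L, 0 ≤ c i ∧ c i ≤ B) :
    ∑ x ∈ greedyDensity c B L G, c x ≤ 2 * B := by
  induction L generalizing G with
  | nil => exact hG
  | cons i rest ih =>
    by_cases h : ∑ x ∈ G, c x ≤ B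
    · rw [greedyDensity, if_pos h]
      refine ih (insert i G) ?_ (fun j hj => hc j (List.mem_cons_of_mem _ hj))
      have hi := hc i (List.mem_cons_self)
      by_cases hiG : i ∈ G
      · rw [Finset.insert_eq_self.mpr hiG]; exact hG
      · rw [Finset.sum_insert hiG]; linarith [hi.2]
    · rw [greedyDensity, if_neg h]
      exact ih G hG (fun j hj => hc j (List.mem_cons_of_mem _ hj))


/-- greedy knapsack-cover guarantee.  Items `1, …, m` have positive
costs `c i` and sizes `p i`; `L` lists the items of `E_B = {i : c i ≤ B}` in some
order of non-decreasing density `c i / p i`, and `G` is obtained by processing `L`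
in order, adding each item provided the current total cost is at most `B`.  Then
`∑_{i ∈ G} c i ≤ 2B`, and for every `X ⊆ {1,…,m}` with `∑_{i ∈ X} c i ≤ B` we have
`∑_{i ∈ G} p i ≥ ∑_{i ∈ X} p i`. -/
theorem stmt19 (m : ℕ) (c p : ℕ → ℝ)
    (hc : ∀ i ∈ Finset.Icc 1 m, 0 < c i) (hp : ∀ i ∈ Finset.Icc 1 m, 0 < p i)
    (B : ℝ) (hB : 0 < B)
    (L : List ℕ) (hnd : L.Nodup)
    (hmem : ∀ i, i ∈ L ↔ (i ∈ Finset.Icc 1 m ∧ c i ≤ B))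
    (hsorted : L.Pairwise fun a b => c a / p a ≤ c b / p b) :
    ∑ i ∈ greedyDensity c B L ∅, c i ≤ 2 * B ∧
    ∀ X : Finset ℕ, X ⊆ Finset.Icc 1 m → ∑ i ∈ X, c i ≤ B →
      ∑ i ∈ X, p i ≤ ∑ i ∈ greedyDensity c B L ∅, p i := by
  set R := greedyDensity c B L ∅ with hRdef
  obtain ⟨L₁, L₂, hL, hR, hstop⟩ := gd_struct c B L ∅
  rw [← hRdef] at hR hstop
  rw [Finset.empty_union] at hR
  have hRL : ∀ j ∈ R, j ∈ L := by
    intro j hj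
    rw [hR, List.mem_toFinset] at hj
    rw [hL]; exact List.mem_append_left _ hj
  have hRIcc : ∀ j ∈ R, j ∈ Finset.Icc 1 m := fun j hj => ((hmem j).1 (hRL j hj)).1
  constructor
  · refine gd_bound c B L ∅ (by simp; linarith) (fun i hi => ?_)
    obtain ⟨h1, h2⟩ := (hmem i).1 hi
    exact ⟨(hc i h1).le, h2⟩
  · intro X hX hXc
    have hXL : ∀ i ∈ X, i ∈ L := by
      intro i hi
      refine (hmem i).2 ⟨hX hi, le_trans ?_ hXc⟩
      exact Finset.single_le_sum (fun j hj => (hc j (hX hj)).le) hi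
    rcases eq_or_ne L₂ [] with h2 | h2
    · -- everything was taken
      have hXR : X ⊆ R := by
        intro i hi
        rw [hR, List.mem_toFinset]
        have := hXL i hi
        rw [hL, h2, List.append_nil] at this
        exact this
      exact Finset.sum_le_sum_of_subset_of_nonneg hXR
        (fun j hj _ => (hp j (hRIcc j hj)).le)
    · -- greedy stopped: total cost of R exceeds B
      have hBR : B < ∑ x ∈ R, c x := lt_of_not_ge (hstop h2)
      -- density comparison
      have hdens : ∀ i ∈ X \ R, ∀ j ∈ R, c j / p j ≤ c i / p i := by
        intro i hi j hj
        rw [hL] at hsorted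
        have hsp := List.pairwise_append.mp hsorted
        have hiL2 : i ∈ L₂ := by
          have hiL : i ∈ L := hXL i (Finset.mem_sdiff.1 hi).1
          rw [hL, List.mem_append] at hiL
          rcases hiL with h | h
          · exact absurd (by rw [hR, List.mem_toFinset]; exact h)
              (Finset.mem_sdiff.1 hi).2
          · exact h
        have hjL1 : j ∈ L₁ := by rw [hR, List.mem_toFinset] at hj; exact hj
        exact hsp.2.2 j hjL1 i hiL2
      have hcost : ∑ i ∈ X \ R, c i < ∑ j ∈ R \ X, c j := by
        have h1 := Finset.sum_inter_add_sum_sdiff X R c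
        have h2 := Finset.sum_inter_add_sum_sdiff R X c
        rw [Finset.inter_comm] at h2
        linarith
      have key : ∑ i ∈ X \ R, p i ≤ ∑ j ∈ R \ X, p j := by
        rcases Finset.eq_empty_or_nonempty (X \ R) with hA | hA
        · rw [hA, Finset.sum_empty]
          exact Finset.sum_nonneg fun j hj =>
            (hp j (hRIcc j (Finset.mem_sdiff.1 hj).1)).le
        · obtain ⟨a₀, ha₀, hmin⟩ := Finset.exists_min_image (X \ R)
            (fun i => c i / p i) hA
          have ha₀X : a₀ ∈ Finset.Icc 1 m := hX (Finset.mem_sdiff.1 ha₀).1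
          have hδ : 0 < c a₀ / p a₀ := div_pos (hc a₀ ha₀X) (hp a₀ ha₀X)
          calc ∑ i ∈ X \ R, p i
              ≤ ∑ i ∈ X \ R, c i / (c a₀ / p a₀) := by
                refine Finset.sum_le_sum fun i hi => ?_
                have hiIcc := hX (Finset.mem_sdiff.1 hi).1
                have := hmin i hi
                rw [le_div_iff₀ hδ]
                rw [le_div_iff₀ (hp i hiIcc)] at this
                linarith [this, mul_comm (p i) (c a₀ / p a₀)]
            _ = (∑ i ∈ X \ R, c i) / (c a₀ / p a₀) := by rw [Finset.sum_div]
            _ ≤ (∑ j ∈ R \ X, c j) / (c a₀ / p a₀) := by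
                gcongr
            _ ≤ ∑ j ∈ R \ X, p j := by
                rw [Finset.sum_div]
                refine Finset.sum_le_sum fun j hj => ?_
                have hjR := (Finset.mem_sdiff.1 hj).1
                have hjIcc := hRIcc j hjR
                have hd := hdens a₀ ha₀ j hjR
                rw [div_le_iff₀ hδ, ← mul_div_assoc, le_div_iff₀ (hp a₀ ha₀X)]
                rw [div_le_div_iff₀ (hp j hjIcc) (hp a₀ ha₀X)] at hd
                linarith [hd, mul_comm (c a₀) (p j)]
      have h1 := Finset.sum_inter_add_sum_sdiff X R p
      have h2 := Finset.sum_inter_add_sum_sdiff R X p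
      rw [Finset.inter_comm] at h2
      linarith
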